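/- For real λ₀ ≠ λ₁ with λ₀+λ₁ ≠ 0, 2λ₀ ≠ 0, 2λ₁ ≠ 0 pairwise distinct from each other and 0, and any h > 0: ∫₀ʰ Φ_{(λ₀,λ₁)}(t)² dt = 2·Φ_{(2λ₀,2λ₁,λ₀+λ₁,0)}(h), where Φ_{(2λ₀,2λ₁,λ₀+λ₁,0)} is the unique exponential polynomial with frequencies 2λ₀, 2λ₁, λ₀+λ₁, 0 vanishing to order 3 at 0 with third derivative 1 at 0. -/

import Mathlib

open Real Finset

/-- The fundamental exponential polynomial for pairwise distinct real frequencies. -/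
noncomputable def fundPhi {N : ℕ} (μ : Fin N → ℝ) (t : ℝ) : ℝ :=
  ∑ j, Real.exp (μ j * t) / ∏ k ∈ Finset.univ.erase j, (μ j - μ k)

set_option maxHeartbeats 1000000 in
theorem stmt_12 (l0 l1 h : ℝ) (hh : 0 < h)
    (hμ : Function.Injective ![2 * l0, 2 * l1, l0 + l1, (0 : ℝ)]) :
    ∫ t in (0 : ℝ)..h, ((Real.exp (l1 * t) - Real.exp (l0 * t)) / (l1 - l0)) ^ 2
      = 2 * fundPhi ![2 * l0, 2 * l1, l0 + l1, (0 : ℝ)] h := by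
  have h01 : l0 ≠ l1 := by
    have := hμ.ne (show (0 : Fin 4) ≠ 1 by decide)
    simp at this
    intro He; exact this (by rw [He])
  have h0 : l0 ≠ 0 := by
    have := hμ.ne (show (0 : Fin 4) ≠ 3 by decide)
    simpa using this
  have h1 : l1 ≠ 0 := by
    have := hμ.ne (show (1 : Fin 4) ≠ 3 by decide)
    simpa using this
  have hs : l0 + l1 ≠ 0 := by
    have := hμ.ne (show (2 : Fin 4) ≠ 3 by decide)
    simpa using this
  have hd : l1 - l0 ≠ 0 := sub_ne_zero.mpr (Ne.symm h01)
  -- compute the integral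
  have key : ∀ t : ℝ, HasDerivAt
      (fun t => (Real.exp (2 * l1 * t) / (2 * l1) - 2 * Real.exp ((l0 + l1) * t) / (l0 + l1)
        + Real.exp (2 * l0 * t) / (2 * l0)) / (l1 - l0) ^ 2)
      (((Real.exp (l1 * t) - Real.exp (l0 * t)) / (l1 - l0)) ^ 2) t := by
    intro t
    have e1 : HasDerivAt (fun t => Real.exp (2 * l1 * t)) (Real.exp (2 * l1 * t) * (2 * l1)) t := by
      simpa using ((hasDerivAt_id t).const_mul (2 * l1)).exp
    have e2 : HasDerivAt (fun t => Real.exp ((l0 + l1) * t))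
        (Real.exp ((l0 + l1) * t) * (l0 + l1)) t := by
      simpa using ((hasDerivAt_id t).const_mul (l0 + l1)).exp
    have e3 : HasDerivAt (fun t => Real.exp (2 * l0 * t)) (Real.exp (2 * l0 * t) * (2 * l0)) t := by
      simpa using ((hasDerivAt_id t).const_mul (2 * l0)).exp
    have := (((e1.div_const (2 * l1)).sub
      ((e2.const_mul 2).div_const (l0 + l1))).add (e3.div_const (2 * l0))).div_const
      ((l1 - l0) ^ 2)
    refine this.congr_deriv ?_
    have E1 : Real.exp (2 * l1 * t) = Real.exp (l1 * t) * Real.exp (l1 * t) := by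
      rw [← Real.exp_add]; ring_nf
    have E2 : Real.exp ((l0 + l1) * t) = Real.exp (l0 * t) * Real.exp (l1 * t) := by
      rw [← Real.exp_add]; ring_nf
    have E3 : Real.exp (2 * l0 * t) = Real.exp (l0 * t) * Real.exp (l0 * t) := by
      rw [← Real.exp_add]; ring_nf
    rw [E1, E2, E3]
    field_simp
    ring
  have hint : ∫ t in (0 : ℝ)..h, ((Real.exp (l1 * t) - Real.exp (l0 * t)) / (l1 - l0)) ^ 2
      = (Real.exp (2 * l1 * h) / (2 * l1) - 2 * Real.exp ((l0 + l1) * h) / (l0 + l1)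
        + Real.exp (2 * l0 * h) / (2 * l0)) / (l1 - l0) ^ 2
      - (Real.exp (2 * l1 * 0) / (2 * l1) - 2 * Real.exp ((l0 + l1) * 0) / (l0 + l1)
        + Real.exp (2 * l0 * 0) / (2 * l0)) / (l1 - l0) ^ 2 := by
    refine intervalIntegral.integral_eq_sub_of_hasDerivAt (fun t _ => key t) ?_
    apply Continuous.intervalIntegrable
    fun_prop
  rw [hint]
  have he0 : Finset.univ.erase (0 : Fin 4) = {1, 2, 3} := by decide
  have he1 : Finset.univ.erase (1 : Fin 4) = {0, 2, 3} := by decide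
  have he2 : Finset.univ.erase (2 : Fin 4) = {0, 1, 3} := by decide
  have he3 : Finset.univ.erase (3 : Fin 4) = {0, 1, 2} := by decide
  simp only [fundPhi, Fin.sum_univ_four, he0, he1, he2, he3]
  rw [show ({1, 2, 3} : Finset (Fin 4)) = insert 1 (insert 2 {3}) from rfl,
    show ({0, 2, 3} : Finset (Fin 4)) = insert 0 (insert 2 {3}) from rfl,
    show ({0, 1, 3} : Finset (Fin 4)) = insert 0 (insert 1 {3}) from rfl,
    show ({0, 1, 2} : Finset (Fin 4)) = insert 0 (insert 1 {2}) from rfl]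
  rw [Finset.prod_insert (by decide), Finset.prod_insert (by decide), Finset.prod_singleton,
    Finset.prod_insert (by decide), Finset.prod_insert (by decide), Finset.prod_singleton,
    Finset.prod_insert (by decide), Finset.prod_insert (by decide), Finset.prod_singleton,
    Finset.prod_insert (by decide), Finset.prod_insert (by decide), Finset.prod_singleton]
  simp only [Matrix.cons_val_zero, Matrix.cons_val_one, Matrix.head_cons,
    Matrix.cons_val_two, Matrix.tail_cons, Matrix.cons_val_three]
  rw [mul_zero, mul_zero, mul_zero, Real.exp_zero, zero_mul, Real.exp_zero]
  have E2 : Real.exp ((l0 + l1) * h) = Real.exp (l0 * h) * Real.exp (l1 * h) := by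
    rw [← Real.exp_add]; ring_nf
  rw [E2]
  rw [show (2 * l0 - 2 * l1) * ((2 * l0 - (l0 + l1)) * (2 * l0 - 0)) = 4 * l0 * (l1 - l0) ^ 2
      by ring,
    show (2 * l1 - 2 * l0) * ((2 * l1 - (l0 + l1)) * (2 * l1 - 0)) = 4 * l1 * (l1 - l0) ^ 2
      by ring,
    show (l0 + l1 - 2 * l0) * ((l0 + l1 - 2 * l1) * (l0 + l1 - 0))
      = -((l1 - l0) ^ 2 * (l0 + l1)) by ring,
    show (0 - 2 * l0) * ((0 - 2 * l1) * (0 - (l0 + l1))) = -(4 * l0 * l1 * (l0 + l1)) by ring]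
  field_simp
  ring
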